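/- Let g be an element of the Grigorchuk group G. If α_0(g)=1 and α_1(g)=1, then β_00(g)=β_11(g), β_01(g)=β_10(g), and β_11(g)≠β_01(g) (modulo 2). -/

import Mathlib

/-!
We model the group `Aut(T)` of automorphisms of the binary rooted tree via portraits:
an automorphism is uniquely determined by the function `List Bool → Bool` recording,
for every vertex `u` (a finite binary word, `false = 0`, `true = 1`), whether the
automorphism is active (i.e. swaps the two subtrees) at `u`.  Under this identification
`α_u(g) = g u`, the section of `g` at `u` is `fun v => g (u ++ v)`, and the group
operation corresponds to composition of tree automorphisms.
-/

/-- Automorphisms of the binary rooted tree, encoded by their portraits. -/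
def AutT : Type := List Bool → Bool

namespace AutT

/-- The section of a tree automorphism at a first-level vertex. -/
def sec (g : AutT) (x : Bool) : AutT := fun u => g (x :: u)

/-- The section of a tree automorphism at an arbitrary vertex `u`. -/
def secAt (g : AutT) (u : List Bool) : AutT := fun v => g (u ++ v)

/-- The activity (decoration of the portrait) of `g` at the vertex `u`:
`α_u(g) = 1` iff `g` is active at `u`. -/
def alpha (g : AutT) (u : List Bool) : Bool := g u

/-- The action of a tree automorphism on the vertices of the tree. -/
def act : AutT → List Bool → List Bool
  | _, [] => []
  | g, x :: u => (xor (g []) x) :: act (sec g x) u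

/-- Auxiliary function defining the product of two tree automorphisms
(`g * h` acts as `g` followed by `h`). -/
def mulAux : List Bool → AutT → AutT → Bool
  | [], g, h => xor (g []) (h [])
  | x :: u, g, h => mulAux u (sec g x) (sec h (xor x (g [])))

instance : Mul AutT := ⟨fun g h u => mulAux u g h⟩

/-- Auxiliary function defining the inverse of a tree automorphism. -/
def invAux : List Bool → AutT → Bool
  | [], g => g []
  | x :: u, g => invAux u (sec g (xor x (g [])))

instance : One AutT := ⟨fun _ => false⟩
instance : Inv AutT := ⟨fun g u => invAux u g⟩

lemma one_apply (u : List Bool) : (1 : AutT) u = false := rfl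

lemma mul_apply_nil (g h : AutT) : (g * h) [] = xor (g []) (h []) := rfl

lemma mul_apply_cons (g h : AutT) (x : Bool) (u : List Bool) :
    (g * h) (x :: u) = (sec g x * sec h (xor x (g []))) u := rfl

lemma sec_mul (g h : AutT) (x : Bool) :
    sec (g * h) x = sec g x * sec h (xor x (g [])) := rfl

lemma sec_one (x : Bool) : sec (1 : AutT) x = 1 := rfl

lemma inv_apply_nil (g : AutT) : (g⁻¹ : AutT) [] = g [] := rfl

lemma sec_inv (g : AutT) (x : Bool) :
    sec (g⁻¹ : AutT) x = (sec g (xor x (g [])))⁻¹ := rfl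

private lemma mul_assoc' (g h k : AutT) : g * h * k = g * (h * k) := by
  funext u
  induction u generalizing g h k with
  | nil => simp [mul_apply_nil, Bool.xor_assoc]
  | cons x u ih =>
      rw [mul_apply_cons, mul_apply_cons, sec_mul, mul_apply_nil, sec_mul, ih,
        Bool.xor_assoc]

private lemma one_mul' (g : AutT) : 1 * g = g := by
  funext u
  induction u generalizing g with
  | nil => simp [mul_apply_nil, one_apply]
  | cons x u ih => rw [mul_apply_cons, sec_one, one_apply, Bool.xor_false, ih]; rfl

private lemma inv_mul_cancel' (g : AutT) : g⁻¹ * g = 1 := by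
  funext u
  induction u generalizing g with
  | nil => simp [mul_apply_nil, inv_apply_nil, one_apply]
  | cons x u ih =>
      rw [mul_apply_cons, inv_apply_nil, sec_inv, ih]; rfl

instance : Group AutT :=
  Group.ofLeftAxioms mul_assoc' one_mul' inv_mul_cancel'

/-- The generator `a = (1,1)σ` of the Grigorchuk group. -/
def genA : AutT := fun u => decide (u = [])

/-- The generators `b`, `c`, `d` of the Grigorchuk group, defined simultaneously:
`bcdAux 0 = b = (a, c)`, `bcdAux 1 = c = (a, d)`, `bcdAux 2 = d = (1, b)`. -/
def bcdAux : Fin 3 → List Bool → Bool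
  | _, [] => false
  | i, false :: u => if i.val = 2 then false else decide (u = [])
  | i, true :: u => bcdAux (i + 1) u

/-- The generator `b = (a, c)` of the Grigorchuk group. -/
def genB : AutT := bcdAux 0

/-- The generator `c = (a, d)` of the Grigorchuk group. -/
def genC : AutT := bcdAux 1

/-- The generator `d = (1, b)` of the Grigorchuk group. -/
def genD : AutT := bcdAux 2

/-- The Grigorchuk group, as a subgroup of the group of binary rooted tree
automorphisms. -/
def Grigorchuk : Subgroup AutT := Subgroup.closure {genA, genB, genC, genD}

/-- `β_{xy}(g) = α_{xy}(g) + α_{x ȳ 0}(g) + α_{x ȳ 1}(g)` (mod 2). -/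
def beta (g : AutT) (x y : Bool) : Bool :=
  xor (g [x, y]) (xor (g [x, !y, false]) (g [x, !y, true]))

end AutT

open AutT

section GrigAux

open AutT

lemma AutT.mul1 (g h : AutT) (x : Bool) :
    (g * h) [x] = xor (g [x]) (h [xor x (g [])]) := rfl

lemma AutT.mul2 (g h : AutT) (x y : Bool) :
    (g * h) [x, y] = xor (g [x, y]) (h [xor x (g []), xor y (g [x])]) := rfl

lemma AutT.mul3 (g h : AutT) (x y z : Bool) :
    (g * h) [x, y, z] =
      xor (g [x, y, z]) (h [xor x (g []), xor y (g [x]), xor z (g [x, y])]) := rfl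

set_option maxHeartbeats 1600000 in
lemma AutT.beta_mul (g h : AutT) (x y : Bool) :
    beta (g * h) x y = xor (beta g x y) (beta h (xor x (g [])) (xor y (g [x]))) := by
  simp only [beta, AutT.mul2, AutT.mul3]
  generalize g [x, !y] = c
  cases x <;> cases y <;> cases hE : g [] <;> cases hA : g [false] <;>
    cases hA' : g [true] <;> cases c <;>
    simp [Bool.xor_assoc, Bool.xor_comm, Bool.xor_left_comm]

/-- The finite data recording `α` on level 1 and `β` on level 2. -/
abbrev T7 := Bool × Bool × Bool × Bool × Bool × Bool × Bool

def Vmap (g : AutT) : T7 :=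
  (g [], g [false], g [true], beta g false false, beta g false true,
    beta g true false, beta g true true)

def pick (x : Bool) (p q : Bool) : Bool := if x then q else p

def comp : T7 → T7 → T7 :=
  fun (e, a0, a1, b00, b01, b10, b11) (E, A0, A1, B00, B01, B10, B11) =>
    (xor e E,
     xor a0 (pick e A0 A1),
     xor a1 (pick e A1 A0),
     xor b00 (pick e (pick a0 B00 B01) (pick a0 B10 B11)),
     xor b01 (pick e (pick (!a0) B00 B01) (pick (!a0) B10 B11)),
     xor b10 (pick e (pick a1 B10 B11) (pick a1 B00 B01)),
     xor b11 (pick e (pick (!a1) B10 B11) (pick (!a1) B00 B01)))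

lemma Vmap_mul (g h : AutT) : Vmap (g * h) = comp (Vmap g) (Vmap h) := by
  simp only [Vmap, comp, AutT.mul1, AutT.beta_mul, mul_apply_nil, pick]
  rcases Bool.eq_false_or_eq_true (g []) with hE | hE <;>
    rcases Bool.eq_false_or_eq_true (g [false]) with hA | hA <;>
    rcases Bool.eq_false_or_eq_true (g [true]) with hA' | hA' <;> simp [hE, hA, hA']

def L : List T7 :=
  [(false, false, false, false, false, false, false),
  (false, false, false, true, true, true, true),
  (false, false, true, false, true, true, true),
  (false, false, true, true, false, false, false),
  (false, true, false, false, false, true, false),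
  (false, true, false, true, true, false, true),
  (false, true, true, false, true, true, false),
  (false, true, true, true, false, false, true),
  (true, false, false, false, false, false, false),
  (true, false, false, true, true, true, true),
  (true, false, true, false, true, true, true),
  (true, false, true, true, false, false, false),
  (true, true, false, false, false, true, false),
  (true, true, false, true, true, false, true),
  (true, true, true, false, true, true, false),
  (true, true, true, true, false, false, true)]

set_option maxRecDepth 20000 in
lemma comp_mem : ∀ v ∈ L, ∀ w ∈ L, comp v w ∈ L := by decide

set_option maxRecDepth 20000 in
set_option synthInstance.maxSize 4096 in
set_option maxHeartbeats 1600000 in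
lemma inv_mem : ∀ v ∈ L, ∀ w : T7, comp v w = Vmap 1 → w ∈ L := by decide

lemma key : ∀ g ∈ Grigorchuk, Vmap g ∈ L := by
  intro g hg
  induction hg using Subgroup.closure_induction with
  | mem x hx =>
      rcases hx with h | h | h | h <;> subst h <;> decide
  | one => decide
  | mul x y hx hy ihx ihy => rw [Vmap_mul]; exact comp_mem _ ihx _ ihy
  | inv x hx ih =>
      refine inv_mem _ ih _ ?_
      rw [← Vmap_mul, mul_inv_cancel]

set_option maxRecDepth 20000 in
lemma final : ∀ v ∈ L, v.2.1 = true → v.2.2.1 = true →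
    (v.2.2.2.1 = v.2.2.2.2.2.2 ∧ v.2.2.2.2.1 = v.2.2.2.2.2.1 ∧
      v.2.2.2.2.2.2 ≠ v.2.2.2.2.1) := by decide

end GrigAux


/-- For `g` in the Grigorchuk group, if `α₀(g) = 1` and `α₁(g) = 1`
then `β₀₀(g) = β₁₁(g) ≠ β₀₁(g) = β₁₀(g)` (mod 2). -/
theorem grigorchuk_beta_constraint_of_active_active
    (g : AutT) (hg : g ∈ Grigorchuk)
    (h0 : alpha g [false] = true) (h1 : alpha g [true] = true) :
    beta g false false = beta g true true ∧ beta g false true = beta g true false ∧ beta g true true ≠ beta g false true := by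
  exact final (Vmap g) (key g hg) h0 h1
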